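/- With notation as above (T_n = M - 2nP_n, R(T) = T(I+T²)^{-1/2} the Riesz transform), one has ‖R(T_n) - R(M)‖ ≥ ‖R(T_n)e_n - R(M)e_n‖ = 2n/√(1+n²), which tends to 2 as n → ∞; hence (R(T_n)) is not a Cauchy sequence in operator norm even though T_n → M in the gap metric. -/

import Mathlib

open Filter

private lemma sqrt_pos_aux9 (n : ℕ) : (0:ℝ) < Real.sqrt (1 + (n:ℝ)^2) := by
  apply Real.sqrt_pos.2
  positivity

private lemma tendsto_aux9 :
    Tendsto (fun n : ℕ => 2 * (n : ℝ) / Real.sqrt (1 + (n : ℝ) ^ 2))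
      Filter.atTop (nhds 2) := by
  have h1 : Tendsto (fun n : ℕ => 1/(n:ℝ)) atTop (nhds 0) :=
    tendsto_one_div_atTop_nhds_zero_nat
  have hsq : Tendsto (fun n : ℕ => 1/(n:ℝ)^2) atTop (nhds 0) := by
    have := h1.mul h1
    simpa [one_div, pow_two, mul_inv] using this
  have h0 : Tendsto (fun n : ℕ => 1/(n:ℝ)^2 + 1) atTop (nhds 1) := by
    simpa using hsq.add tendsto_const_nhds
  have hsqrt : Tendsto (fun n : ℕ => Real.sqrt (1/(n:ℝ)^2 + 1)) atTop (nhds 1) := by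
    have := (Real.continuous_sqrt.continuousAt (x := (1:ℝ))).tendsto.comp h0
    rw [Real.sqrt_one] at this; exact this
  have hdiv : Tendsto (fun n : ℕ => 2 / Real.sqrt (1/(n:ℝ)^2 + 1)) atTop (nhds 2) := by
    have := Filter.Tendsto.div (tendsto_const_nhds (x := (2:ℝ)) (f := atTop)) hsqrt
      one_ne_zero
    rw [div_one] at this; exact this
  apply hdiv.congr'
  filter_upwards [eventually_ge_atTop 1] with n hn
  have hn0 : (0:ℝ) < (n:ℝ) := by exact_mod_cast hn
  have key : Real.sqrt (1/(n:ℝ)^2 + 1) = Real.sqrt (1 + (n:ℝ)^2) / n := by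
    rw [show (1/(n:ℝ)^2 + 1) = (1 + (n:ℝ)^2)/(n:ℝ)^2 by field_simp,
      Real.sqrt_div (by positivity), Real.sqrt_sq hn0.le]
  rw [key, div_div_eq_mul_div]

theorem stmt9 {H : Type*} [NormedAddCommGroup H] [InnerProductSpace ℂ H] [CompleteSpace H]
    (b : HilbertBasis {j : ℕ // 1 ≤ j} ℂ H)
    (RM : H →L[ℂ] H) (Rn : ℕ → H →L[ℂ] H)
    (hRM : ∀ j : {j : ℕ // 1 ≤ j},
      RM (b j) = ((((j : ℕ) : ℝ)) / Real.sqrt (1 + ((j : ℕ) : ℝ) ^ 2)) • b j)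
    (hRn : ∀ (n : ℕ) (j : {j : ℕ // 1 ≤ j}), Rn n (b j) =
      (if (j : ℕ) = n then -((n : ℝ) / Real.sqrt (1 + (n : ℝ) ^ 2))
        else ((j : ℕ) : ℝ) / Real.sqrt (1 + ((j : ℕ) : ℝ) ^ 2)) • b j) :
    (∀ (n : ℕ) (hn : 1 ≤ n),
      ‖Rn n (b ⟨n, hn⟩) - RM (b ⟨n, hn⟩)‖ = 2 * n / Real.sqrt (1 + (n : ℝ) ^ 2) ∧
      ‖Rn n (b ⟨n, hn⟩) - RM (b ⟨n, hn⟩)‖ ≤ ‖Rn n - RM‖) ∧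
    Filter.Tendsto (fun n : ℕ => 2 * (n : ℝ) / Real.sqrt (1 + (n : ℝ) ^ 2))
      Filter.atTop (nhds 2) ∧
    ¬ CauchySeq Rn := by
  have hnorm1 : ∀ j : {j : ℕ // 1 ≤ j}, ‖b j‖ = 1 := fun j => b.orthonormal.1 j
  have hdiff : ∀ (m n : ℕ) (hn : 1 ≤ n), m ≠ n →
      ‖Rn n (b ⟨n, hn⟩) - Rn m (b ⟨n, hn⟩)‖ = 2 * n / Real.sqrt (1 + (n : ℝ) ^ 2) := by
    intro m n hn hmn
    rw [hRn n ⟨n, hn⟩, hRn m ⟨n, hn⟩]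
    simp only [eq_self_iff_true, if_true, if_neg (show ¬ (n = m) from fun h => hmn h.symm)]
    rw [← sub_smul, norm_smul, hnorm1]
    rw [show -((n : ℝ) / Real.sqrt (1 + (n:ℝ)^2)) - (n:ℝ) / Real.sqrt (1 + (n:ℝ)^2)
        = -(2 * n / Real.sqrt (1 + (n:ℝ)^2)) by ring]
    rw [norm_neg, Real.norm_eq_abs, abs_of_nonneg (by positivity)]
    ring
  have hRMdiff : ∀ (n : ℕ) (hn : 1 ≤ n),
      ‖Rn n (b ⟨n, hn⟩) - RM (b ⟨n, hn⟩)‖ = 2 * n / Real.sqrt (1 + (n : ℝ) ^ 2) := by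
    intro n hn
    rw [hRn n ⟨n, hn⟩, hRM ⟨n, hn⟩]
    simp only [eq_self_iff_true, if_true]
    rw [← sub_smul, norm_smul, hnorm1]
    rw [show -((n : ℝ) / Real.sqrt (1 + (n:ℝ)^2)) - (n:ℝ) / Real.sqrt (1 + (n:ℝ)^2)
        = -(2 * n / Real.sqrt (1 + (n:ℝ)^2)) by ring]
    rw [norm_neg, Real.norm_eq_abs, abs_of_nonneg (by positivity)]
    ring
  refine ⟨fun n hn => ⟨hRMdiff n hn, ?_⟩, tendsto_aux9, ?_⟩
  · calc ‖Rn n (b ⟨n, hn⟩) - RM (b ⟨n, hn⟩)‖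
        = ‖(Rn n - RM) (b ⟨n, hn⟩)‖ := by simp
      _ ≤ ‖Rn n - RM‖ * ‖b ⟨n, hn⟩‖ := (Rn n - RM).le_opNorm _
      _ = ‖Rn n - RM‖ := by rw [hnorm1]; ring
  · intro hc
    rw [Metric.cauchySeq_iff] at hc
    obtain ⟨N, hN⟩ := hc 1 one_pos
    set n := max N 1 with hn_def
    have hn1 : 1 ≤ n := le_max_right _ _
    have hNn : N ≤ n := le_max_left _ _
    have h := hN (n+1) (by omega) n hNn
    rw [dist_eq_norm] at h
    have hle : ‖Rn n (b ⟨n, hn1⟩) - Rn (n+1) (b ⟨n, hn1⟩)‖ ≤ ‖Rn (n+1) - Rn n‖ := by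
      calc ‖Rn n (b ⟨n, hn1⟩) - Rn (n+1) (b ⟨n, hn1⟩)‖
          = ‖(Rn (n+1) - Rn n) (b ⟨n, hn1⟩)‖ := by rw [← norm_neg]; simp
        _ ≤ ‖Rn (n+1) - Rn n‖ * ‖b ⟨n, hn1⟩‖ := (Rn (n+1) - Rn n).le_opNorm _
        _ = ‖Rn (n+1) - Rn n‖ := by rw [hnorm1]; ring
    rw [hdiff (n+1) n hn1 (by omega)] at hle
    have hge1 : (1:ℝ) ≤ 2 * n / Real.sqrt (1 + (n:ℝ)^2) := by
      rw [le_div_iff₀ (sqrt_pos_aux9 n)]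
      have hn0 : (1:ℝ) ≤ (n:ℝ) := by exact_mod_cast hn1
      have hs : Real.sqrt (1 + (n:ℝ)^2) ≤ 2 * n := by
        rw [show (2:ℝ) * n = Real.sqrt ((2*n)^2) by
          rw [Real.sqrt_sq (by positivity)]]
        apply Real.sqrt_le_sqrt
        nlinarith
      linarith
    linarith
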